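/- Let g : ℝ → ℝ be π-periodic, let m, n be positive integers, p = gcd(m,n), r = n/p, μ = π/n, and h(x) = ∏_{j=0}^{r−1} g(x + j·m·μ). Then for all x, ∏_{i=0}^{n−1} g(x + m·i·μ) = h(x)^p. -/

import Mathlib

open Real

theorem stmt_6 (g : ℝ → ℝ) (hper : ∀ x, g (x + π) = g x)
    (m n : ℕ) (hm : 0 < m) (hn : 0 < n) :
    let p := Nat.gcd m n
    let r := n / p
    let μ := π / n
    let h : ℝ → ℝ := fun x => ∏ j ∈ Finset.range r, g (x + j * m * μ)
    ∀ x, ∏ i ∈ Finset.range n, g (x + m * i * μ) = (h x) ^ p := by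
  intro p r μ h x
  have gper : ∀ (k : ℕ) (y : ℝ), g (y + k * π) = g y := by
    intro k
    induction k with
    | zero => intro y; simp
    | succ k ih =>
      intro y
      have : y + (↑(k+1) : ℝ) * π = (y + k * π) + π := by push_cast; ring
      rw [this, hper, ih]
  have hp : 0 < p := Nat.gcd_pos_of_pos_left n hm
  have hpm : p ∣ m := Nat.gcd_dvd_left m n
  have hpn : p ∣ n := Nat.gcd_dvd_right m n
  set q := m / p with hq
  have hmrqn : m * r = q * n := by
    obtain ⟨a, ha⟩ := hpm
    obtain ⟨b, hb⟩ := hpn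
    have hr : r = b := by simp only [r, hb]; exact Nat.mul_div_cancel_left b hp
    have hqa : q = a := by simp only [hq, ha]; exact Nat.mul_div_cancel_left a hp
    rw [hr, hqa, ha, hb]; ring
  have hkey : (m : ℝ) * r * μ = q * π := by
    have hc : ((m * r : ℕ) : ℝ) = ((q * n : ℕ) : ℝ) := by rw [hmrqn]
    push_cast at hc
    have hn' : (n : ℝ) ≠ 0 := by positivity
    show (m : ℝ) * r * (π / n) = q * π
    field_simp
    linear_combination hc
  have main : ∀ k : ℕ, ∏ i ∈ Finset.range (k * r), g (x + m * i * μ) = (h x) ^ k := by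
    intro k
    induction k with
    | zero => simp
    | succ k ih =>
      have : (k + 1) * r = k * r + r := by ring
      rw [this, Finset.prod_range_add, ih, pow_succ]
      congr 1
      apply Finset.prod_congr rfl
      intro j _
      have harg : x + (m : ℝ) * (↑(k * r + j)) * μ = (x + j * m * μ) + (k * q : ℕ) * π := by
        push_cast
        have : (m : ℝ) * (k * r + j) * μ = k * ((m:ℝ) * r * μ) + j * m * μ := by ring
        rw [this, hkey]; ring
      rw [harg, gper]
  have hn_eq : n = p * r := (Nat.mul_div_cancel' hpn).symm
  calc ∏ i ∈ Finset.range n, g (x + m * i * μ)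
      = ∏ i ∈ Finset.range (p * r), g (x + m * i * μ) := by rw [← hn_eq]
    _ = (h x) ^ p := main p
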